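/- Let Q₄ : ℤ⁴ → ℤ be the quadratic form Q₄(a, b₁, b₂, b₃) = a² − b₁² − b₂² − b₃². Let G be the subgroup of ℤ-linear automorphisms of ℤ⁴ generated by: the four maps negating one coordinate, the maps permuting the last three coordinates, and the reflection r(a, b₁, b₂, b₃) = (a + c, b₁ + c, b₂ + c, b₃ + c) with c = a − b₁ − b₂ − b₃. Then every element of G preserves Q₄, and for every α ∈ ℤ⁴ with Q₄(α) ≥ 0 there exists g ∈ G such that g(α) = (a, b₁, b₂, b₃) with b₁ ≥ b₂ ≥ b₃ ≥ 0 and a ≥ b₁ + b₂ + b₃. -/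
import Mathlib


/-- The intersection form of `CP² # 3CP̄²`. -/
def Q4 (v : Fin 4 → ℤ) : ℤ := v 0 ^ 2 - v 1 ^ 2 - v 2 ^ 2 - v 3 ^ 2

/-- Negation of the `j`-th coordinate. -/
def neg4 (j : Fin 4) (v : Fin 4 → ℤ) : Fin 4 → ℤ := fun i => if i = j then -v i else v i

/-- Reflection in the class `(1,1,1,1)`. -/
def r4 (v : Fin 4 → ℤ) : Fin 4 → ℤ :=
  ![v 0 + (v 0 - v 1 - v 2 - v 3), v 1 + (v 0 - v 1 - v 2 - v 3),
    v 2 + (v 0 - v 1 - v 2 - v 3), v 3 + (v 0 - v 1 - v 2 - v 3)]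

/-- The generating set: the four coordinate negations, the permutations of the last
three coordinates (permutations of `Fin 4` fixing `0`), and the reflection `r4`,
viewed as ℤ-linear automorphisms of `ℤ⁴`. -/
def gens4 : Set ((Fin 4 → ℤ) ≃ₗ[ℤ] (Fin 4 → ℤ)) :=
  {e | (∃ j, ⇑e = neg4 j) ∨ (∃ σ : Equiv.Perm (Fin 4), σ 0 = 0 ∧ ⇑e = fun v => v ∘ σ) ∨
    ⇑e = r4}

section aux
set_option linter.unnecessarySeqFocus false

def negE (j : Fin 4) : (Fin 4 → ℤ) ≃ₗ[ℤ] (Fin 4 → ℤ) where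
  toFun := neg4 j
  invFun := neg4 j
  map_add' u v := by funext i; by_cases h : i = j <;> simp [neg4, h] <;> ring
  map_smul' c v := by funext i; by_cases h : i = j <;> simp [neg4, h]
  left_inv v := by funext i; by_cases h : i = j <;> simp [neg4, h]
  right_inv v := by funext i; by_cases h : i = j <;> simp [neg4, h]

def permE (σ : Equiv.Perm (Fin 4)) : (Fin 4 → ℤ) ≃ₗ[ℤ] (Fin 4 → ℤ) where
  toFun v := v ∘ σ
  invFun v := v ∘ σ.symm
  map_add' u v := rfl
  map_smul' c v := rfl
  left_inv v := by funext i; simp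
  right_inv v := by funext i; simp

lemma r4_invol : Function.Involutive r4 := by
  intro v; funext i; fin_cases i <;> simp [r4] <;> ring

def r4E : (Fin 4 → ℤ) ≃ₗ[ℤ] (Fin 4 → ℤ) where
  toFun := r4
  invFun := r4
  map_add' u v := by funext i; fin_cases i <;> simp [r4] <;> ring
  map_smul' c v := by funext i; fin_cases i <;> simp [r4] <;> ring
  left_inv := r4_invol
  right_inv := r4_invol

lemma negE_apply (j : Fin 4) (v : Fin 4 → ℤ) : negE j v = neg4 j v := rfl
lemma permE_apply (σ : Equiv.Perm (Fin 4)) (v : Fin 4 → ℤ) : permE σ v = v ∘ σ := rfl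
lemma r4E_apply (v : Fin 4 → ℤ) : r4E v = r4 v := rfl
lemma mul_app (g h : (Fin 4 → ℤ) ≃ₗ[ℤ] (Fin 4 → ℤ)) (v : Fin 4 → ℤ) :
    (g * h) v = g (h v) := rfl
lemma one_app (v : Fin 4 → ℤ) : (1 : (Fin 4 → ℤ) ≃ₗ[ℤ] (Fin 4 → ℤ)) v = v := rfl

lemma negE_mem (j : Fin 4) : negE j ∈ Subgroup.closure gens4 :=
  Subgroup.subset_closure (Or.inl ⟨j, rfl⟩)

lemma permE_mem (σ : Equiv.Perm (Fin 4)) (h : σ 0 = 0) : permE σ ∈ Subgroup.closure gens4 :=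
  Subgroup.subset_closure (Or.inr (Or.inl ⟨σ, h, rfl⟩))

lemma r4E_mem : r4E ∈ Subgroup.closure gens4 :=
  Subgroup.subset_closure (Or.inr (Or.inr rfl))

lemma Q4_sum (v : Fin 4 → ℤ) : Q4 v = 2 * v 0 ^ 2 - ∑ i : Fin 4, v i ^ 2 := by
  simp [Q4, Fin.sum_univ_four]; ring

lemma Q4_r4 (v : Fin 4 → ℤ) : Q4 (r4 v) = Q4 v := by
  simp [Q4, r4]; ring

lemma Q4_preserved : ∀ g ∈ Subgroup.closure gens4, ∀ α, Q4 (g α) = Q4 α := by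
  intro g hg
  induction hg using Subgroup.closure_induction with
  | mem e he =>
    rcases he with ⟨j, hj⟩ | ⟨σ, hσ0, hσ⟩ | hr
    · intro α
      rw [hj]
      have : ∀ i, neg4 j α i ^ 2 = α i ^ 2 := by
        intro i; by_cases h : i = j <;> simp [neg4, h]
      simp [Q4, this]
    · intro α
      rw [hσ, Q4_sum, Q4_sum]
      simp only [Function.comp_apply, hσ0]
      rw [Equiv.sum_comp σ (fun i => α i ^ 2)]
    · intro α; rw [hr, Q4_r4]
  | one => intro α; rfl
  | mul x y hx hy ihx ihy =>
    intro α; rw [show (x * y) α = x (y α) from rfl, ihx, ihy]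
  | inv x hx ih =>
    intro α
    conv_rhs => rw [← x.apply_symm_apply α]
    exact (ih _).symm

def Nrm (v : Fin 4 → ℤ) : Prop :=
  v 1 ≥ v 2 ∧ v 2 ≥ v 3 ∧ v 3 ≥ 0 ∧ v 0 ≥ v 1 + v 2 + v 3

lemma cond_mem (P : Prop) [Decidable P] (j : Fin 4) :
    (if P then negE j else 1) ∈ Subgroup.closure gens4 := by
  split
  · exact negE_mem j
  · exact one_mem _

lemma abs_step (α : Fin 4 → ℤ) :
    ∃ g ∈ Subgroup.closure gens4, (∀ i, 0 ≤ g α i) ∧ (g α 0).natAbs = (α 0).natAbs := by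
  classical
  refine ⟨(if α 0 < 0 then negE 0 else 1) * ((if α 1 < 0 then negE 1 else 1) *
    ((if α 2 < 0 then negE 2 else 1) * (if α 3 < 0 then negE 3 else 1))), ?_, ?_, ?_⟩
  · exact mul_mem (cond_mem _ _) (mul_mem (cond_mem _ _) (mul_mem (cond_mem _ _) (cond_mem _ _)))
  · intro i
    by_cases h0 : α 0 < 0 <;> by_cases h1 : α 1 < 0 <;> by_cases h2 : α 2 < 0 <;>
      by_cases h3 : α 3 < 0 <;> fin_cases i <;>
      simp [h0, h1, h2, h3, mul_app, negE_apply, one_app, neg4] <;> omega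
  · by_cases h0 : α 0 < 0 <;> by_cases h1 : α 1 < 0 <;> by_cases h2 : α 2 < 0 <;>
      by_cases h3 : α 3 < 0 <;>
      simp [h0, h1, h2, h3, mul_app, negE_apply, one_app, neg4] <;> omega

lemma sort_step (v : Fin 4 → ℤ) :
    ∃ σ : Equiv.Perm (Fin 4), σ 0 = 0 ∧ v (σ 1) ≥ v (σ 2) ∧ v (σ 2) ≥ v (σ 3) := by
  rcases le_total (v 1) (v 2) with h12 | h12 <;>
  rcases le_total (v 1) (v 3) with h13 | h13 <;>
  rcases le_total (v 2) (v 3) with h23 | h23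
  · have e1 : (Equiv.swap 1 3 : Equiv.Perm (Fin 4)) 1 = 3 := by decide
    have e2 : (Equiv.swap 1 3 : Equiv.Perm (Fin 4)) 2 = 2 := by decide
    have e3 : (Equiv.swap 1 3 : Equiv.Perm (Fin 4)) 3 = 1 := by decide
    exact ⟨(Equiv.swap 1 3 : Equiv.Perm (Fin 4)), by decide, by rw [e1, e2]; omega, by rw [e2, e3]; omega⟩
  · have e1 : (Equiv.swap 1 2 * Equiv.swap 2 3 : Equiv.Perm (Fin 4)) 1 = 2 := by decide
    have e2 : (Equiv.swap 1 2 * Equiv.swap 2 3 : Equiv.Perm (Fin 4)) 2 = 3 := by decide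
    have e3 : (Equiv.swap 1 2 * Equiv.swap 2 3 : Equiv.Perm (Fin 4)) 3 = 1 := by decide
    exact ⟨(Equiv.swap 1 2 * Equiv.swap 2 3 : Equiv.Perm (Fin 4)), by decide, by rw [e1, e2]; omega, by rw [e2, e3]; omega⟩
  · exact ⟨1, by decide, by simp; omega, by simp; omega⟩
  · have e1 : (Equiv.swap 1 2 : Equiv.Perm (Fin 4)) 1 = 2 := by decide
    have e2 : (Equiv.swap 1 2 : Equiv.Perm (Fin 4)) 2 = 1 := by decide
    have e3 : (Equiv.swap 1 2 : Equiv.Perm (Fin 4)) 3 = 3 := by decide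
    exact ⟨(Equiv.swap 1 2 : Equiv.Perm (Fin 4)), by decide, by rw [e1, e2]; omega, by rw [e2, e3]; omega⟩
  · have e1 : (Equiv.swap 2 3 * Equiv.swap 1 2 : Equiv.Perm (Fin 4)) 1 = 3 := by decide
    have e2 : (Equiv.swap 2 3 * Equiv.swap 1 2 : Equiv.Perm (Fin 4)) 2 = 1 := by decide
    have e3 : (Equiv.swap 2 3 * Equiv.swap 1 2 : Equiv.Perm (Fin 4)) 3 = 2 := by decide
    exact ⟨(Equiv.swap 2 3 * Equiv.swap 1 2 : Equiv.Perm (Fin 4)), by decide, by rw [e1, e2]; omega, by rw [e2, e3]; omega⟩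
  · exact ⟨1, by decide, by simp; omega, by simp; omega⟩
  · have e1 : (Equiv.swap 2 3 : Equiv.Perm (Fin 4)) 1 = 1 := by decide
    have e2 : (Equiv.swap 2 3 : Equiv.Perm (Fin 4)) 2 = 3 := by decide
    have e3 : (Equiv.swap 2 3 : Equiv.Perm (Fin 4)) 3 = 2 := by decide
    exact ⟨(Equiv.swap 2 3 : Equiv.Perm (Fin 4)), by decide, by rw [e1, e2]; omega, by rw [e2, e3]; omega⟩
  · exact ⟨1, by decide, by simp; omega, by simp; omega⟩

set_option maxHeartbeats 1600000 in
lemma main_induction : ∀ n : ℕ, ∀ α : Fin 4 → ℤ, 0 ≤ Q4 α → (α 0).natAbs ≤ n →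
    ∃ g ∈ Subgroup.closure gens4, Nrm (g α) := by
  intro n
  induction n with
  | zero =>
    intro α hQ h0
    have h0' : α 0 = 0 := by omega
    have h123 : α 1 = 0 ∧ α 2 = 0 ∧ α 3 = 0 := by
      simp only [Q4, h0'] at hQ
      refine ⟨?_, ?_, ?_⟩ <;>
        nlinarith [sq_nonneg (α 1), sq_nonneg (α 2), sq_nonneg (α 3)]
    exact ⟨1, one_mem _, by simp [Nrm, one_app, h0', h123.1, h123.2.1, h123.2.2]⟩
  | succ n ih =>
    intro α hQ h0
    obtain ⟨g₁, hg₁, hβnn, hβ0⟩ := abs_step α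
    obtain ⟨σ, hσ0, hs12, hs23⟩ := sort_step (g₁ α)
    have hσmem := permE_mem σ hσ0
    obtain ⟨γ, hγrepr⟩ : ∃ γ, (permE σ * g₁) α = γ := ⟨_, rfl⟩
    have hγ1 : γ 1 = g₁ α (σ 1) := by rw [← hγrepr]; rfl
    have hγ2 : γ 2 = g₁ α (σ 2) := by rw [← hγrepr]; rfl
    have hγ3 : γ 3 = g₁ α (σ 3) := by rw [← hγrepr]; rfl
    have hγ0 : γ 0 = g₁ α 0 := by
      rw [← hγrepr, show (permE σ * g₁) α 0 = g₁ α (σ 0) from rfl, hσ0]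
    have hγnn : ∀ i, 0 ≤ γ i := by intro i; rw [← hγrepr]; exact hβnn _
    have hγQ : Q4 γ = Q4 α := by
      rw [← hγrepr]; exact Q4_preserved _ (mul_mem hσmem hg₁) α
    have hg12 : γ 1 ≥ γ 2 := by rw [hγ1, hγ2]; exact hs12
    have hg23 : γ 2 ≥ γ 3 := by rw [hγ2, hγ3]; exact hs23
    by_cases hbig : γ 0 ≥ γ 1 + γ 2 + γ 3
    · exact ⟨_, mul_mem hσmem hg₁, by rw [hγrepr]; exact ⟨hg12, hg23, hγnn 3, hbig⟩⟩
    · push_neg at hbig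
      have hQγ : 0 ≤ Q4 γ := hγQ ▸ hQ
      have hq : γ 1 ^ 2 + γ 2 ^ 2 + γ 3 ^ 2 ≤ γ 0 ^ 2 := by
        simp only [Q4] at hQγ; linarith
      have hγ0pos : 0 < γ 0 := by
        rcases lt_or_eq_of_le (hγnn 0) with h | h
        · exact h
        · exfalso
          have h1 : γ 1 = 0 := by nlinarith [sq_nonneg (γ 1), sq_nonneg (γ 2), sq_nonneg (γ 3)]
          have h2 : γ 2 = 0 := by nlinarith [sq_nonneg (γ 1), sq_nonneg (γ 2), sq_nonneg (γ 3)]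
          have h3 : γ 3 = 0 := by nlinarith [sq_nonneg (γ 1), sq_nonneg (γ 2), sq_nonneg (γ 3)]
          omega
      obtain ⟨δ, hδrepr⟩ : ∃ δ, r4 γ = δ := ⟨_, rfl⟩
      have hδ0 : δ 0 = 2 * γ 0 - γ 1 - γ 2 - γ 3 := by
        rw [← hδrepr]; show γ 0 + (γ 0 - γ 1 - γ 2 - γ 3) = _; ring
      have hsum : (γ 1 + γ 2 + γ 3) ^ 2 ≤ 3 * γ 0 ^ 2 := by
        nlinarith [sq_nonneg (γ 1 - γ 2), sq_nonneg (γ 1 - γ 3), sq_nonneg (γ 2 - γ 3)]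
      have hδ0pos : 0 < δ 0 := by
        rw [hδ0]
        nlinarith [hγnn 1, hγnn 2, hγnn 3, hγ0pos, hsum]
      have hδ0lt : δ 0 < γ 0 := by rw [hδ0]; omega
      have hγ0n : (γ 0).natAbs ≤ n + 1 := by
        have h1 := hγnn 0
        have h2 : (γ 0).natAbs = (α 0).natAbs := by rw [hγ0, hβ0]
        omega
      have hδn : (δ 0).natAbs ≤ n := by omega
      have hδQ : 0 ≤ Q4 δ := by rw [← hδrepr, Q4_r4]; exact hQγ
      obtain ⟨g₂, hg₂, hn⟩ := ih δ hδQ hδn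
      refine ⟨g₂ * (r4E * (permE σ * g₁)), mul_mem hg₂ (mul_mem r4E_mem (mul_mem hσmem hg₁)), ?_⟩
      rw [mul_app, mul_app, hγrepr, show r4E γ = r4 γ from rfl, hδrepr]
      exact hn

end aux

theorem normalization_CP2_3CP2bar :
    (∀ g ∈ Subgroup.closure gens4, ∀ α, Q4 (g α) = Q4 α) ∧
    (∀ α : Fin 4 → ℤ, 0 ≤ Q4 α → ∃ g ∈ Subgroup.closure gens4,
      g α 1 ≥ g α 2 ∧ g α 2 ≥ g α 3 ∧ g α 3 ≥ 0 ∧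
      g α 0 ≥ g α 1 + g α 2 + g α 3) := by
  refine ⟨Q4_preserved, fun α hQ => ?_⟩
  obtain ⟨g, hg, hn⟩ := main_induction (α 0).natAbs α hQ le_rfl
  exact ⟨g, hg, hn⟩
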